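/- The probabilistic Dyck language distribution cannot be computed by any WFA: there is no WFA A over Σ = {[, ]} such that f_A(u) equals the probability of generating u under the PCFG with rules S → SS (prob 0.2), S → [S] (prob 0.4), S → [] (prob 0.4). Equivalently, it suffices to show the Hankel matrix of this distribution has infinite rank, as witnessed by the infinite family of rows indexed by prefixes [ⁿ being linearly independent. -/

import Mathlib

open Matrix

/-- Derivation trees of the PCFG `S → SS | [S] | []` over `Σ = {[, ]}`,
encoded with `true = '['` and `false = ']'`. -/
inductive DyckTree : Type
  | leaf : DyckTree                       -- S → []
  | wrap : DyckTree → DyckTree            -- S → [S]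
  | node : DyckTree → DyckTree → DyckTree -- S → SS

/-- The string produced by a derivation tree. -/
def DyckTree.yield : DyckTree → List Bool
  | .leaf => [true, false]
  | .wrap t => true :: (t.yield ++ [false])
  | .node l r => l.yield ++ r.yield

/-- The probability of a derivation tree: rules `S → SS`, `S → [S]`, `S → []` have
probabilities `0.2`, `0.4`, `0.4` respectively. -/
noncomputable def DyckTree.prob : DyckTree → ℝ
  | .leaf => 0.4
  | .wrap t => 0.4 * t.prob
  | .node l r => 0.2 * l.prob * r.prob

/-- The probabilistic Dyck language distribution: the total probability of all
derivations of `u` (and `0` on strings with no derivation). -/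
noncomputable def dyckProb (u : List Bool) : ℝ :=
  ∑' t : {t : DyckTree // t.yield = u}, (t : DyckTree).prob

lemma yield_ne_nil (t : DyckTree) : t.yield ≠ [] := by
  induction t <;> simp [DyckTree.yield, *]

lemma count_eq (t : DyckTree) : t.yield.count true = t.yield.count false := by
  induction t with
  | leaf => simp [DyckTree.yield]
  | wrap t ih => simp [DyckTree.yield, List.count_append, List.count_cons, ih]
  | node l r ihl ihr => simp [DyckTree.yield, List.count_append, ihl, ihr]

def nested : ℕ → DyckTree
  | 0 => .leaf
  | n+1 => .wrap (nested n)

lemma nested_yield (n : ℕ) :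
    (nested n).yield = List.replicate (n+1) true ++ List.replicate (n+1) false := by
  induction n with
  | zero => simp [nested, DyckTree.yield, List.replicate]
  | succ n ih =>
      simp [nested, DyckTree.yield, ih, List.replicate_succ]
      rw [← List.replicate_succ', List.replicate_succ]

lemma nested_prob (n : ℕ) : (nested n).prob = (0.4:ℝ)^(n+1) := by
  induction n with
  | zero => simp [nested, DyckTree.prob]
  | succ n ih => simp [nested, DyckTree.prob, ih]; ring

lemma yield_unique : ∀ (t : DyckTree) (n : ℕ),
    t.yield = List.replicate (n+1) true ++ List.replicate (n+1) false → t = nested n := by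
  intro t
  induction t with
  | leaf =>
      intro n h
      simp [DyckTree.yield] at h
      have hl := congrArg List.length h
      simp at hl
      have hn : n = 0 := by omega
      subst hn; rfl
  | wrap s ih =>
      intro n h
      simp only [DyckTree.yield] at h
      cases n with
      | zero =>
          have h1 : s.yield ++ [false] = [false] := by
            simpa [List.replicate] using h
          have h2 : s.yield = [] := by
            cases hy : s.yield with
            | nil => rfl
            | cons a l =>
                rw [hy] at h1
                have := congrArg List.length h1
                simp at this
          exact absurd h2 (yield_ne_nil s)
      | succ m =>
          rw [List.replicate_succ] at h
          simp only [List.cons_append, List.cons.injEq, true_and] at h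
          rw [List.replicate_succ' (n := m+1) (a := false), ← List.append_assoc] at h
          have hs : s.yield = List.replicate (m+1) true ++ List.replicate (m+1) false :=
            List.append_cancel_right h
          rw [ih m hs]; rfl
  | node l r ihl ihr =>
      intro n h
      exfalso
      set a := l.yield.length with ha
      have htake : l.yield = (List.replicate (n+1) true ++ List.replicate (n+1) false).take a := by
        rw [← h, DyckTree.yield, List.take_left']
        rfl
      have hlen : a + r.yield.length = (n+1) + (n+1) := by
        have := congrArg List.length h
        simpa [DyckTree.yield] using this
      by_cases hle : a ≤ n+1
      · have h1 : l.yield = List.replicate a true := by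
          rw [htake, List.take_append_of_le_length (by simpa using hle), List.take_replicate,
            min_eq_left hle]
        have hc := count_eq l
        rw [h1] at hc
        simp [List.count_replicate] at hc
        have : l.yield = [] := by rw [h1, hc]; rfl
        exact yield_ne_nil l this
      · push_neg at hle
        have h1 : l.yield = List.replicate (n+1) true ++ List.replicate (a - (n+1)) false := by
          rw [htake, List.take_append, List.take_replicate, List.take_replicate]
          simp only [List.length_replicate]
          rw [min_eq_right (le_of_lt hle), min_eq_left (by omega)]
        have hc := count_eq l
        rw [h1] at hc
        simp [List.count_append, List.count_replicate] at hc
        have : r.yield.length = 0 := by omega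
        exact yield_ne_nil r (List.length_eq_zero_iff.mp this)

lemma dyck_val (n m : ℕ) :
    dyckProb (List.replicate (n+1) true ++ List.replicate (m+1) false)
      = if n = m then (0.4:ℝ)^(n+1) else 0 := by
  by_cases hnm : n = m
  · subst hnm
    rw [if_pos rfl, dyckProb,
      tsum_eq_single (⟨nested n, nested_yield n⟩ :
          {t : DyckTree // t.yield = List.replicate (n+1) true ++ List.replicate (n+1) false})
        (fun b hb => absurd (Subtype.ext (yield_unique b.1 n b.2)) hb)]
    exact nested_prob n
  · rw [if_neg hnm]
    haveI : IsEmpty {t : DyckTree // t.yield = List.replicate (n+1) true ++ List.replicate (m+1) false} := by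
      constructor
      rintro ⟨t, ht⟩
      have hc := count_eq t
      rw [ht] at hc
      simp [List.count_append, List.count_replicate] at hc
      omega
    rw [dyckProb, tsum_empty]

/-- no WFA over `Σ = {[, ]}` computes the probabilistic Dyck
language distribution. -/
theorem dyck_not_recognizable :
    ¬ ∃ (k : ℕ) (α0 αinf : Fin k → ℝ) (A : Bool → Matrix (Fin k) (Fin k) ℝ),
        ∀ u : List Bool, dyckProb u = α0 ⬝ᵥ ((u.map A).prod).mulVec αinf := by
  rintro ⟨k, α0, αinf, A, hA⟩
  set r : Fin (k+1) → (Fin k → ℝ) := fun i => vecMul α0 ((A true)^((i:ℕ)+1)) with hr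
  set c : Fin (k+1) → (Fin k → ℝ) := fun j => ((A false)^((j:ℕ)+1)).mulVec αinf with hc
  have key : ∀ i j : Fin (k+1), r i ⬝ᵥ c j = if (i:ℕ) = (j:ℕ) then (0.4:ℝ)^((i:ℕ)+1) else 0 := by
    intro i j
    have := hA (List.replicate ((i:ℕ)+1) true ++ List.replicate ((j:ℕ)+1) false)
    rw [dyck_val] at this
    rw [List.map_append, List.prod_append, List.map_replicate, List.map_replicate,
      List.prod_replicate, List.prod_replicate, ← Matrix.mulVec_mulVec,
      Matrix.dotProduct_mulVec] at this
    exact this.symm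
  have hli : LinearIndependent ℝ r := by
    rw [Fintype.linearIndependent_iff]
    intro g hg j
    have h0 : (∑ i, g i • r i) ⬝ᵥ c j = 0 := by rw [hg]; simp
    have hsw : (∑ i, g i • r i) ⬝ᵥ c j = ∑ i, g i * (r i ⬝ᵥ c j) := by
      simp only [dotProduct, Finset.sum_apply, Pi.smul_apply, smul_eq_mul,
        Finset.sum_mul, mul_assoc, Finset.mul_sum]
      rw [Finset.sum_comm]
    rw [hsw] at h0
    simp only [key] at h0
    rw [Finset.sum_eq_single j] at h0
    · simp at h0
      rcases h0 with h | h
      · exact h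
      · exfalso; norm_num at h
    · intro b _ hb
      simp [Fin.val_eq_val, hb]
    · simp
  have hcard := hli.fintype_card_le_finrank
  simp at hcard
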